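/- Every nonnegative primitive tensor 𝔸 of order m ≥ 2 and dimension n has primitive degree at most 2^{n^m}: there exists r ≤ 2^{n^m} such that 𝔸^r is essentially positive. -/

import Mathlib

open scoped BigOperators

noncomputable section

/-- An "order (1 + |α|)" tensor of dimension `|I|` over `R`: entries indexed by a
head index in `I` and a tail of indices `α → I`. -/
abbrev Tensor (R I α : Type) : Type := I → (α → I) → R

/-- The general tensor product: `(A*B)_{i α₁ ⋯ α_m} = ∑ a_{i i₂ ⋯} ∏ b_{i_j α_j}`. -/
def tmul {R I α β : Type} [CommSemiring R] [Fintype I] [DecidableEq α] [Fintype α]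
    (A : Tensor R I α) (B : Tensor R I β) : Tensor R I (α × β) :=
  fun i f => ∑ t : α → I, A i t * ∏ j : α, B (t j) (fun b => f (j, b))

/-- The general tensor product of a tensor with a vector (an order-1 tensor). -/
def tapp {R I α : Type} [CommSemiring R] [Fintype I] [DecidableEq α] [Fintype α]
    (A : Tensor R I α) (x : I → R) : I → R :=
  fun i => ∑ t : α → I, A i t * ∏ j : α, x (t j)

/-- The general tensor product `P * A` where `P` is a matrix (an order-2 tensor). -/
def matMulT {R I α : Type} [CommSemiring R] [Fintype I]
    (P : Matrix I I R) (A : Tensor R I α) : Tensor R I α :=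
  fun i f => ∑ j : I, P i j * A j f

/-- The general tensor product `A * Q` where `Q` is a matrix (an order-2 tensor). -/
def tMulMat {R I α : Type} [CommSemiring R] [Fintype I] [DecidableEq α] [Fintype α]
    (A : Tensor R I α) (Q : Matrix I I R) : Tensor R I α :=
  fun i f => ∑ t : α → I, A i t * ∏ j : α, Q (t j) (f j)

/-- The unit tensor `𝕀`: entries `1` exactly on the diagonal. -/
def unitT (R I α : Type) [CommSemiring R] [DecidableEq I] [Fintype α] [DecidableEq α] :
    Tensor R I α :=
  fun i f => if ∀ j, f j = i then 1 else 0

/-- The direct product of two tensors of the same order. -/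
def dprod {R I J α : Type} [CommSemiring R]
    (A : Tensor R I α) (B : Tensor R J α) : Tensor R (I × J) α :=
  fun p f => A p.1 (fun j => (f j).1) * B p.2 (fun j => (f j).2)

end

noncomputable section

/-- Tail index type of the `r+1`-st power (under the general tensor product) of a
tensor with tail `Fin m`. -/
def PowIdx (m : ℕ) : ℕ → Type
  | 0 => Fin m
  | r + 1 => Fin m × PowIdx m r

def powIdxFintype (m : ℕ) : (r : ℕ) → Fintype (PowIdx m r)
  | 0 => inferInstanceAs (Fintype (Fin m))
  | r + 1 => letI := powIdxFintype m r; inferInstanceAs (Fintype (Fin m × PowIdx m r))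

def powIdxDecEq (m : ℕ) : (r : ℕ) → DecidableEq (PowIdx m r)
  | 0 => inferInstanceAs (DecidableEq (Fin m))
  | r + 1 => letI := powIdxDecEq m r; inferInstanceAs (DecidableEq (Fin m × PowIdx m r))

instance (m r : ℕ) : Fintype (PowIdx m r) := powIdxFintype m r
instance (m r : ℕ) : DecidableEq (PowIdx m r) := powIdxDecEq m r

/-- `tpow A r` is the power `𝔸^{r+1}` of `𝔸` under the general tensor product. -/
def tpow {R : Type} [CommSemiring R] {n m : ℕ} (A : Tensor R (Fin n) (Fin m)) :
    (r : ℕ) → Tensor R (Fin n) (PowIdx m r)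
  | 0 => A
  | r + 1 => tmul A (tpow A r)

/-- A real tensor `𝔹` is essentially positive if `𝔹x > 0` entrywise for every
nonzero nonnegative vector `x`. -/
def EssPos {n : ℕ} {α : Type} [DecidableEq α] [Fintype α]
    (B : Tensor ℝ (Fin n) α) : Prop :=
  ∀ x : Fin n → ℝ, (∀ i, 0 ≤ x i) → x ≠ 0 → ∀ i, 0 < tapp B x i

end

noncomputable section Aux

open Finset

/-- Applying a product tensor to a vector equals composing the applications. -/
lemma tapp_tmul {R I α β : Type} [CommSemiring R] [Fintype I] [DecidableEq α] [Fintype α]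
    [DecidableEq β] [Fintype β] (A : Tensor R I α) (B : Tensor R I β) (x : I → R) :
    tapp (tmul A B) x = tapp A (tapp B x) := by
  funext i
  unfold tapp tmul
  have step1 : (∑ f : α × β → I,
      (∑ t : α → I, A i t * ∏ j : α, B (t j) fun b => f (j, b)) * ∏ p : α × β, x (f p))
      = ∑ h : α → β → I,
        (∑ t : α → I, A i t * ∏ j : α, B (t j) (h j)) * ∏ j : α, ∏ b : β, x (h j b) := by
    refine Fintype.sum_equiv (Equiv.curry α β I) _ _ fun f => ?_
    rw [Fintype.prod_prod_type]
    rfl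
  rw [step1]
  have step2 : ∀ t : α → I,
      A i t * (∏ j : α, ∑ g : β → I, B (t j) g * ∏ b : β, x (g b))
      = ∑ h : α → β → I, A i t * ((∏ j : α, B (t j) (h j)) * ∏ j : α, ∏ b : β, x (h j b)) := by
    intro t
    rw [Finset.prod_univ_sum, Fintype.piFinset_univ, Finset.mul_sum]
    refine Finset.sum_congr rfl fun h _ => ?_
    rw [Finset.prod_mul_distrib]
  simp only [step2]
  rw [Finset.sum_comm]
  refine Finset.sum_congr rfl fun h _ => ?_
  rw [Finset.sum_mul]
  exact Finset.sum_congr rfl fun t _ => mul_assoc _ _ _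

lemma tapp_nonneg {n : ℕ} {α : Type} [DecidableEq α] [Fintype α]
    {A : Tensor ℝ (Fin n) α} {x : Fin n → ℝ} (hA : ∀ i f, 0 ≤ A i f)
    (hx : ∀ i, 0 ≤ x i) (i : Fin n) : 0 ≤ tapp A x i := by
  refine Finset.sum_nonneg fun t _ => mul_nonneg (hA i t) (Finset.prod_nonneg fun j _ => hx _)

lemma tapp_pos_iff {n : ℕ} {α : Type} [DecidableEq α] [Fintype α]
    {A : Tensor ℝ (Fin n) α} {x : Fin n → ℝ} (hA : ∀ i f, 0 ≤ A i f)
    (hx : ∀ i, 0 ≤ x i) (i : Fin n) :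
    0 < tapp A x i ↔ ∃ t : α → Fin n, A i t ≠ 0 ∧ ∀ j, 0 < x (t j) := by
  constructor
  · intro hpos
    by_contra hcon
    push_neg at hcon
    have : tapp A x i = 0 := by
      refine Finset.sum_eq_zero fun t _ => ?_
      by_cases hAt : A i t = 0
      · simp [hAt]
      · obtain ⟨j, hj⟩ := hcon t hAt
        have hj0 : x (t j) = 0 := le_antisymm hj (hx _)
        rw [Finset.prod_eq_zero (Finset.mem_univ j) hj0, mul_zero]
    simp [this] at hpos
  · rintro ⟨t, hAt, ht⟩
    refine Finset.sum_pos' (fun t' _ => mul_nonneg (hA i t') (Finset.prod_nonneg fun j _ => hx _))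
      ⟨t, Finset.mem_univ t, mul_pos (lt_of_le_of_ne (hA i t) (Ne.symm hAt))
        (Finset.prod_pos fun j _ => ht j)⟩

open Classical in
/-- The induced dynamics on supports. -/
noncomputable def phiT {n m : ℕ} (A : Tensor ℝ (Fin n) (Fin m)) (S : Finset (Fin n)) :
    Finset (Fin n) :=
  Finset.univ.filter (fun i => ∃ t : Fin m → Fin n, A i t ≠ 0 ∧ ∀ j, t j ∈ S)

lemma mem_phiT {n m : ℕ} {A : Tensor ℝ (Fin n) (Fin m)} {S : Finset (Fin n)} {i : Fin n} :
    i ∈ phiT A S ↔ ∃ t : Fin m → Fin n, A i t ≠ 0 ∧ ∀ j, t j ∈ S := by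
  classical simp [phiT]

/-- The support of a nonnegative vector. -/
noncomputable def suppV {n : ℕ} (x : Fin n → ℝ) : Finset (Fin n) :=
  Finset.univ.filter (fun i => 0 < x i)

lemma mem_suppV {n : ℕ} {x : Fin n → ℝ} {i : Fin n} : i ∈ suppV x ↔ 0 < x i := by
  simp [suppV]

lemma suppV_tapp {n m : ℕ} {A : Tensor ℝ (Fin n) (Fin m)} (hA : ∀ i f, 0 ≤ A i f)
    {x : Fin n → ℝ} (hx : ∀ i, 0 ≤ x i) :
    suppV (tapp A x) = phiT A (suppV x) := by
  ext i
  rw [mem_suppV, mem_phiT, tapp_pos_iff hA hx]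
  constructor
  · rintro ⟨t, h1, h2⟩
    exact ⟨t, ne_of_gt (lt_of_le_of_ne (hA i t) (Ne.symm h1)), fun j => mem_suppV.2 (h2 j)⟩
  · rintro ⟨t, h1, h2⟩
    exact ⟨t, h1, fun j => mem_suppV.1 (h2 j)⟩

lemma tapp_tpow {n m : ℕ} (A : Tensor ℝ (Fin n) (Fin m)) (r : ℕ) (x : Fin n → ℝ) :
    tapp (tpow A r) x = (fun y => tapp A y)^[r + 1] x := by
  induction r with
  | zero => simp [tpow]; rfl
  | succ r ih =>
    show tapp (tmul A (tpow A r)) x = _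
    rw [tapp_tmul, ih, ← Function.iterate_succ_apply' (fun y => tapp A y)]

lemma iterate_tapp_nonneg {n m : ℕ} {A : Tensor ℝ (Fin n) (Fin m)} (hA : ∀ i f, 0 ≤ A i f)
    {x : Fin n → ℝ} (hx : ∀ i, 0 ≤ x i) (k : ℕ) (i : Fin n) :
    0 ≤ (fun y => tapp A y)^[k] x i := by
  induction k generalizing x with
  | zero => exact hx i
  | succ k ih =>
    rw [Function.iterate_succ_apply]
    exact ih (fun j => tapp_nonneg hA hx j)

lemma suppV_iterate {n m : ℕ} {A : Tensor ℝ (Fin n) (Fin m)} (hA : ∀ i f, 0 ≤ A i f)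
    {x : Fin n → ℝ} (hx : ∀ i, 0 ≤ x i) (k : ℕ) :
    suppV ((fun y => tapp A y)^[k] x) = (phiT A)^[k] (suppV x) := by
  induction k generalizing x with
  | zero => rfl
  | succ k ih =>
    rw [Function.iterate_succ_apply, Function.iterate_succ_apply,
      ih (fun j => tapp_nonneg hA hx j), suppV_tapp hA hx]

/-- Essential positivity of a power in terms of the support dynamics. -/
lemma essPos_iff {n m : ℕ} {A : Tensor ℝ (Fin n) (Fin m)} (hA : ∀ i f, 0 ≤ A i f) (r : ℕ) :
    EssPos (tpow A r) ↔
      ∀ S : Finset (Fin n), S.Nonempty → (phiT A)^[r + 1] S = Finset.univ := by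
  constructor
  · intro hE S hS
    classical
    set x : Fin n → ℝ := fun i => if i ∈ S then 1 else 0 with hxdef
    have hx : ∀ i, 0 ≤ x i := fun i => by dsimp [x]; split <;> norm_num
    have hsupp : suppV x = S := by
      ext i; rw [mem_suppV]; dsimp [x]; split <;> simp_all
    have hxne : x ≠ 0 := by
      obtain ⟨i, hi⟩ := hS
      intro h0
      have : x i = 0 := congrFun h0 i
      simp [x, hi] at this
    have := hE x hx hxne
    have hsup : suppV (tapp (tpow A r) x) = (phiT A)^[r + 1] (suppV x) := by
      rw [tapp_tpow, suppV_iterate hA hx]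
    rw [hsupp] at hsup
    rw [← hsup]
    exact Finset.eq_univ_iff_forall.2 fun i => mem_suppV.2 (this i)
  · intro h x hx hxne i
    have hS : (suppV x).Nonempty := by
      obtain ⟨j, hj⟩ : ∃ j, x j ≠ 0 := by
        by_contra hc; push_neg at hc; exact hxne (funext hc)
      exact ⟨j, mem_suppV.2 (lt_of_le_of_ne (hx j) (Ne.symm hj))⟩
    have hsup : suppV (tapp (tpow A r) x) = (phiT A)^[r + 1] (suppV x) := by
      rw [tapp_tpow, suppV_iterate hA hx]
    have : i ∈ suppV (tapp (tpow A r) x) := by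
      rw [hsup, h _ hS]; exact Finset.mem_univ i
    exact mem_suppV.1 this

lemma phiT_mono {n m : ℕ} (A : Tensor ℝ (Fin n) (Fin m)) {S T : Finset (Fin n)} (h : S ⊆ T) :
    phiT A S ⊆ phiT A T := by
  intro i hi
  rw [mem_phiT] at hi ⊢
  obtain ⟨t, h1, h2⟩ := hi
  exact ⟨t, h1, fun j => h (h2 j)⟩

lemma phiT_iterate_mono {n m : ℕ} (A : Tensor ℝ (Fin n) (Fin m)) {S T : Finset (Fin n)}
    (h : S ⊆ T) (k : ℕ) : (phiT A)^[k] S ⊆ (phiT A)^[k] T := by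
  induction k generalizing S T with
  | zero => exact h
  | succ k ih => exact ih (phiT_mono A h)

/-- Hitting a fixed point happens within `card - 1` steps. -/
lemma hit_fixed {β : Type} [Fintype β] [DecidableEq β] (f : β → β) (u : β) (hu : f u = u)
    (k : ℕ) (x : β) (hk : f^[k] x = u) : f^[Fintype.card β - 1] x = u := by
  induction k using Nat.strong_induction_on generalizing x with
  | _ k ih =>
    by_cases hle : k ≤ Fintype.card β - 1
    · have : f^[Fintype.card β - 1] x = f^[Fintype.card β - 1 - k] (f^[k] x) := by
        rw [← Function.iterate_add_apply]
        congr 1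
        omega
      rw [this, hk, Function.iterate_fixed hu]
    · push_neg at hle
      have hcard : Fintype.card β ≤ k := by omega
      obtain ⟨a, b, hab, heq⟩ :
          ∃ a b : Fin (Fintype.card β + 1), a ≠ b ∧ f^[(a : ℕ)] x = f^[(b : ℕ)] x := by
        have hlt : Fintype.card β < Fintype.card (Fin (Fintype.card β + 1)) := by simp
        exact Fintype.exists_ne_map_eq_of_card_lt (fun a : Fin (Fintype.card β + 1) =>
          f^[(a : ℕ)] x) hlt
      wlog hab' : (a : ℕ) < (b : ℕ) generalizing a b
      · exact this b a hab.symm heq.symm (by omega)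
      have hb : (b : ℕ) ≤ k := by
        have := b.isLt
        omega
      have hk' : f^[(k - (b : ℕ)) + (b : ℕ)] x = u := by
        rwa [show (k - (b : ℕ)) + (b : ℕ) = k by omega]
      rw [Function.iterate_add_apply, ← heq, ← Function.iterate_add_apply] at hk'
      exact ih ((k - (b : ℕ)) + (a : ℕ)) (by omega) _ hk' 

end Aux

/-- a nonnegative primitive tensor of order `m + 1 ≥ 2` and dimension
`n` (i.e. some power `𝔸^{s+1} = tpow A s` is essentially positive) has primitive
degree at most `2^(n^(m+1))`: some power `𝔸^{r+1}` with `r + 1 ≤ 2^(n^(m+1))` is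
essentially positive. -/
theorem primitive_degree_bound (n m : ℕ) (hm : 1 ≤ m)
    (A : Tensor ℝ (Fin n) (Fin m)) (hA : ∀ i f, 0 ≤ A i f)
    (hprim : ∃ s, EssPos (tpow A s)) :
    ∃ r, r + 1 ≤ 2 ^ n ^ (m + 1) ∧ EssPos (tpow A r) := by
  classical
  rcases Nat.eq_zero_or_pos n with hn | hn
  · subst hn
    refine ⟨0, by simp, ?_⟩
    intro x _ hxne
    exact absurd (funext fun i => absurd i.isLt (by omega)) hxne
  · obtain ⟨s, hs⟩ := hprim
    have hdyn : ∀ S : Finset (Fin n), S.Nonempty → (phiT A)^[s + 1] S = Finset.univ :=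
      (essPos_iff hA s).1 hs
    -- univ is a fixed point of phiT A
    have huniv : phiT A (Finset.univ : Finset (Fin n)) = Finset.univ := by
      have h1 : ((Finset.univ : Finset (Fin n))).Nonempty :=
        ⟨⟨0, hn⟩, Finset.mem_univ _⟩
      have h2 := hdyn Finset.univ h1
      have h3 : (phiT A)^[s + 1] (Finset.univ : Finset (Fin n)) ⊆ phiT A Finset.univ := by
        rw [Function.iterate_succ_apply']
        exact phiT_mono A (Finset.subset_univ _)
      rw [h2] at h3
      exact Finset.Subset.antisymm (Finset.subset_univ _) h3
    -- every nonempty S hits univ within card - 1 = 2^n - 1 steps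
    have hcard : Fintype.card (Finset (Fin n)) = 2 ^ n := by simp
    have hhit : ∀ S : Finset (Fin n), S.Nonempty →
        (phiT A)^[2 ^ n - 1] S = Finset.univ := by
      intro S hS
      have := hit_fixed (phiT A) Finset.univ huniv (s + 1) S (hdyn S hS)
      rwa [hcard] at this
    have h2n : 2 ≤ 2 ^ n := by
      calc 2 = 2 ^ 1 := by norm_num
      _ ≤ 2 ^ n := Nat.pow_le_pow_right (by norm_num) hn
    refine ⟨2 ^ n - 2, ?_, ?_⟩
    · have hle : n ≤ n ^ (m + 1) := Nat.le_self_pow (by omega) n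
      have : 2 ^ n ≤ 2 ^ n ^ (m + 1) := Nat.pow_le_pow_right (by norm_num) hle
      omega
    · rw [essPos_iff hA]
      have hr : 2 ^ n - 2 + 1 = 2 ^ n - 1 := by omega
      rw [hr]
      exact hhit
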